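/- The set of tuples (c₀, …, c_{m−1}, d₀, …, d_{n−1}, a, b) ∈ 𝔽^{m+n+2} satisfying the four Kirchhoff gluing equations (i)–(iv) is a linear subspace of dimension exactly m + n − 2; equivalently, the 4 × (m + n + 2) coefficient matrix of the system has rank 4. Concretely, the values c₁, …, c_{m−1}, d₁, …, d_{n−1} may be chosen freely and then c₀, d₀, a, b are uniquely determined. -/

import Mathlib

open Finset

set_option maxHeartbeats 1000000 in
/-- The set of tuples `(c, d, a, b) ∈ 𝔽^m × 𝔽^n × 𝔽 × 𝔽` satisfying the four Kirchhoff
gluing equations (i)–(iv) is a linear subspace of dimension exactly `m + n − 2`; concretely,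
the values `c₁, …, c_{m−1}, d₁, …, d_{n−1}` may be chosen freely and then `c₀, d₀, a, b`
are uniquely determined. -/
theorem kirchhoff_collapse_solution_space {F : Type*} [Field F] (m n : ℕ)
    (hm : 1 ≤ m) (hn : 1 ≤ n)
    (hmF : (m : F) ≠ 0) (hnF : (n : F) ≠ 0) (hmnF : (m : F) + (n : F) - 2 ≠ 0)
    (L : F) (hL : L ≠ 0) :
    ∃ S : Submodule F ((Fin m → F) × (Fin n → F) × F × F),
      (∀ p : (Fin m → F) × (Fin n → F) × F × F,
        p ∈ S ↔
          (p.1 ⟨0, hm⟩ = L⁻¹ * p.2.2.1 ∧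
           p.2.2.2 = (2 / (m : F)) * (∑ i, p.1 i) - p.1 ⟨0, hm⟩ ∧
           p.2.2.1 = (2 / (n : F)) * (∑ i, p.2.1 i) - p.2.1 ⟨0, hn⟩ ∧
           p.2.1 ⟨0, hn⟩ = L * p.2.2.2)) ∧
      Module.finrank F S = m + n - 2 ∧
      (∀ (cf : Fin m → F) (df : Fin n → F),
        ∃! p : (Fin m → F) × (Fin n → F) × F × F,
          p ∈ S ∧ (∀ i : Fin m, i ≠ ⟨0, hm⟩ → p.1 i = cf i) ∧
            (∀ i : Fin n, i ≠ ⟨0, hn⟩ → p.2.1 i = df i)) := by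
  classical
  have htwo : (2 : F) ≠ 0 := by
    intro h2
    rcases Nat.even_or_odd m with ⟨k, hk⟩ | ⟨k, hk⟩
    · apply hmF; subst hk; push_cast; linear_combination (k : F) * h2
    · rcases Nat.even_or_odd n with ⟨l, hl⟩ | ⟨l, hl⟩
      · apply hnF; subst hl; push_cast; linear_combination (l : F) * h2
      · apply hmnF; subst hk; subst hl; push_cast
        linear_combination ((k : F) + l) * h2
  set zm : Fin m := ⟨0, hm⟩ with hzm
  set zn : Fin n := ⟨0, hn⟩ with hzn
  let S : Submodule F ((Fin m → F) × (Fin n → F) × F × F) :=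
    { carrier := {p | p.1 zm = L⁻¹ * p.2.2.1 ∧
        p.2.2.2 = (2 / (m : F)) * (∑ i, p.1 i) - p.1 zm ∧
        p.2.2.1 = (2 / (n : F)) * (∑ i, p.2.1 i) - p.2.1 zn ∧
        p.2.1 zn = L * p.2.2.2}
      add_mem' := by
        rintro p q ⟨h1, h2, h3, h4⟩ ⟨g1, g2, g3, g4⟩
        refine ⟨?_, ?_, ?_, ?_⟩ <;>
          simp only [Prod.fst_add, Prod.snd_add, Pi.add_apply, Finset.sum_add_distrib]
        · rw [h1, g1]; ring
        · rw [h2, g2, h1, g1]; ring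
        · rw [h3, g3]; ring
        · rw [h4, g4]; ring
      zero_mem' := by simp
      smul_mem' := by
        rintro c p ⟨h1, h2, h3, h4⟩
        refine ⟨?_, ?_, ?_, ?_⟩ <;>
          simp only [Prod.smul_fst, Prod.smul_snd, Pi.smul_apply, smul_eq_mul,
            ← Finset.mul_sum]
        · rw [h1]; ring
        · rw [h2, h1]; ring
        · rw [h3]; ring
        · rw [h4]; ring }
  have hmem : ∀ p : (Fin m → F) × (Fin n → F) × F × F,
      p ∈ S ↔
        (p.1 zm = L⁻¹ * p.2.2.1 ∧
         p.2.2.2 = (2 / (m : F)) * (∑ i, p.1 i) - p.1 zm ∧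
         p.2.2.1 = (2 / (n : F)) * (∑ i, p.2.1 i) - p.2.1 zn ∧
         p.2.1 zn = L * p.2.2.2) := fun p => Iff.rfl
  -- zero off-diagonal implies zero
  have hzero : ∀ p ∈ S, (∀ i : Fin m, i ≠ zm → p.1 i = 0) →
      (∀ j : Fin n, j ≠ zn → p.2.1 j = 0) → p = 0 := by
    rintro ⟨c, d, a, b⟩ hp hc hd
    obtain ⟨h1, h2, h3, h4⟩ := (hmem _).1 hp
    simp only at h1 h2 h3 h4 hc hd ⊢
    have hsc : ∑ i, c i = c zm :=
      Finset.sum_eq_single_of_mem zm (mem_univ _) (fun i _ hi => hc i hi)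
    have hsd : ∑ j, d j = d zn :=
      Finset.sum_eq_single_of_mem zn (mem_univ _) (fun j _ hj => hd j hj)
    rw [hsc] at h2
    rw [hsd] at h3
    have ha : a = L * c zm := by rw [h1]; field_simp
    have hkey : (m : F) * (2 * ((m : F) + (n : F) - 2) * (L * c zm)) = 0 := by
      have e : L * c zm = (2 / (n : F)) * (L * ((2 / (m : F)) * c zm - c zm))
          - L * ((2 / (m : F)) * c zm - c zm) := by
        rw [← h2, ← h4, ← h3, ha]
      field_simp at e
      linear_combination ((m : F) * L) * e
    have hc0 : c zm = 0 := by
      have h' : (2 * ((m : F) + (n : F) - 2)) ≠ 0 := mul_ne_zero htwo hmnF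
      have h0 := (mul_eq_zero.1 hkey).resolve_left hmF
      have h'' := (mul_eq_zero.1 h0).resolve_left h'
      exact (mul_eq_zero.1 h'').resolve_left hL
    have ha0 : a = 0 := by rw [ha, hc0, mul_zero]
    have hb0 : b = 0 := by rw [h2, hc0]; ring
    have hd0 : d zn = 0 := by rw [h4, hb0, mul_zero]
    refine Prod.ext ?_ (Prod.ext ?_ (Prod.ext ?_ ?_)) <;> simp only
    · funext i
      by_cases hi : i = zm
      · rw [hi, hc0]; rfl
      · rw [hc i hi]; rfl
    · funext j
      by_cases hj : j = zn
      · rw [hj, hd0]; rfl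
      · rw [hd j hj]; rfl
    · exact ha0
    · exact hb0
  -- existence
  have hex : ∀ (cf : Fin m → F) (df : Fin n → F),
      ∃ p : (Fin m → F) × (Fin n → F) × F × F, p ∈ S ∧
        (∀ i : Fin m, i ≠ zm → p.1 i = cf i) ∧
        (∀ j : Fin n, j ≠ zn → p.2.1 j = df j) := by
    intro cf df
    set C' : F := ∑ i ∈ univ.erase zm, cf i with hC
    set D' : F := ∑ j ∈ univ.erase zn, df j with hD
    have hden : (2 * ((m : F) + (n : F) - 2) * L) ≠ 0 :=
      mul_ne_zero (mul_ne_zero htwo hmnF) hL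
    obtain ⟨c0, hc0'⟩ : ∃ x : F, x * (2 * ((m : F) + (n : F) - 2) * L) =
        (2 - (n : F)) * 2 * L * C' + 2 * (m : F) * D' :=
      ⟨((2 - (n : F)) * 2 * L * C' + 2 * (m : F) * D') /
        (2 * ((m : F) + (n : F) - 2) * L), div_mul_cancel₀ _ hden⟩
    obtain ⟨b0, hb0⟩ : ∃ x : F, x = (2 / (m : F)) * (c0 + C') - c0 := ⟨_, rfl⟩
    refine ⟨(Function.update cf zm c0, Function.update df zn (L * b0), L * c0, b0),
      (hmem _).2 ⟨?_, ?_, ?_, ?_⟩, ?_, ?_⟩ <;> simp only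
    · rw [Function.update_self]
      field_simp
    · rw [Finset.sum_update_of_mem (mem_univ zm), Finset.sdiff_singleton_eq_erase,
        Function.update_self, hb0, hC]
    · rw [Finset.sum_update_of_mem (mem_univ zn), Finset.sdiff_singleton_eq_erase,
        Function.update_self, ← hD]
      rw [hb0]
      field_simp
      linear_combination hc0'
    · rw [Function.update_self]
    · intro i hi; exact Function.update_of_ne hi _ _
    · intro j hj; exact Function.update_of_ne hj _ _
  -- uniqueness
  have huniq : ∀ (cf : Fin m → F) (df : Fin n → F)
      (p q : (Fin m → F) × (Fin n → F) × F × F), p ∈ S →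
      (∀ i : Fin m, i ≠ zm → p.1 i = cf i) → (∀ j : Fin n, j ≠ zn → p.2.1 j = df j) →
      q ∈ S → (∀ i : Fin m, i ≠ zm → q.1 i = cf i) →
      (∀ j : Fin n, j ≠ zn → q.2.1 j = df j) → p = q := by
    intro cf df p q hp hpc hpd hq hqc hqd
    have h0 := hzero (p - q) (sub_mem hp hq)
      (fun i hi => by
        simp only [Prod.fst_sub, Pi.sub_apply, hpc i hi, hqc i hi, sub_self])
      (fun j hj => by
        simp only [Prod.snd_sub, Prod.fst_sub, Pi.sub_apply, hpd j hj, hqd j hj, sub_self])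
    exact sub_eq_zero.1 h0
  -- the linear equivalence with the free coordinates
  let W := ({i : Fin m // i ≠ zm} → F) × ({j : Fin n // j ≠ zn} → F)
  let φ : S →ₗ[F] W :=
    { toFun := fun p => (fun i => p.1.1 i.1, fun j => p.1.2.1 j.1)
      map_add' := fun p q => rfl
      map_smul' := fun c p => rfl }
  have hφinj : Function.Injective φ := by
    intro p q h
    have h1 : ∀ i : {i : Fin m // i ≠ zm}, p.1.1 i.1 = q.1.1 i.1 :=
      fun i => congrFun (congrArg Prod.fst h) i
    have h2 : ∀ j : {j : Fin n // j ≠ zn}, p.1.2.1 j.1 = q.1.2.1 j.1 :=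
      fun j => congrFun (congrArg Prod.snd h) j
    exact Subtype.ext (huniq p.1.1 p.1.2.1 p.1 q.1 p.2
      (fun _ _ => rfl) (fun _ _ => rfl) q.2
      (fun i hi => (h1 ⟨i, hi⟩).symm) (fun j hj => (h2 ⟨j, hj⟩).symm))
  have hφsurj : Function.Surjective φ := by
    rintro ⟨u, v⟩
    obtain ⟨p, hp, hpc, hpd⟩ := hex
      (fun i => if h : i = zm then 0 else u ⟨i, h⟩)
      (fun j => if h : j = zn then 0 else v ⟨j, h⟩)
    refine ⟨⟨p, hp⟩, ?_⟩
    refine Prod.ext ?_ ?_ <;> simp only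
    · funext i
      have := hpc i.1 i.2
      simpa [i.2, φ] using this
    · funext j
      have := hpd j.1 j.2
      simpa [j.2, φ] using this
  have hrank : Module.finrank F S = m + n - 2 := by
    have heq := (LinearEquiv.ofBijective φ ⟨hφinj, hφsurj⟩).finrank_eq
    rw [heq]
    have : Module.finrank F W =
        Fintype.card {i : Fin m // i ≠ zm} + Fintype.card {j : Fin n // j ≠ zn} := by
      simp [W, Module.finrank_prod, Module.finrank_pi]
    rw [this]
    have c1 : Fintype.card {i : Fin m // i ≠ zm} = m - 1 := by
      simp [Fintype.card_subtype_compl, Fintype.card_subtype_eq]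
    have c2 : Fintype.card {j : Fin n // j ≠ zn} = n - 1 := by
      simp [Fintype.card_subtype_compl, Fintype.card_subtype_eq]
    rw [c1, c2]; omega
  refine ⟨S, hmem, hrank, ?_⟩
  intro cf df
  obtain ⟨p, hp, hpc, hpd⟩ := hex cf df
  exact ⟨p, ⟨hp, hpc, hpd⟩, fun q ⟨hq, hqc, hqd⟩ =>
    huniq cf df q p hq hqc hqd hp hpc hpd⟩
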